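/- arXiv:2504.19424 — 2 statements merged into one kernel-verified Lean document; each statement's English description precedes it below -/
import Mathlib

section
/- For a concave positively homogeneous F : ℝⁿ → ℝ and x interior, the discrete Euler gap dominates the infinitesimal one: for every positive integer k, ∑ᵢ [F(k·x) − F(k·x − xᵢeᵢ)] − F(x) ≥ ∑ᵢ (−F'(x; −xᵢeᵢ)) − F(x) ≥ 0. -/
open Filter Topology

/-- One-sided directional derivative: `L` is the limit of `(F (x + t • d) - F x) / t` as `t ↓ 0`. -/
def HasDirDeriv {n : ℕ} (F : (Fin n → ℝ) → ℝ) (x d : Fin n → ℝ) (L : ℝ) : Prop :=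
  Tendsto (fun t : ℝ => (F (x + t • d) - F x) / t) (nhdsWithin 0 (Set.Ioi 0)) (nhds L)

/-- For concave `F`, the difference quotient at positive `t` is dominated by the one-sided
directional derivative. -/
lemma quot_le_dirDeriv {n : ℕ} (F : (Fin n → ℝ) → ℝ)
    (hconc : ConcaveOn ℝ Set.univ F) (x d : Fin n → ℝ) (L : ℝ)
    (hL : HasDirDeriv F x d L) {t : ℝ} (ht : 0 < t) :
    F (x + t • d) - F x ≤ t * L := by
  have key : ∀ s ∈ Set.Ioo (0:ℝ) t,
      (F (x + t • d) - F x) / t ≤ (F (x + s • d) - F x) / s := by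
    intro s hs
    have hs0 : 0 < s := hs.1
    have hst : s < t := hs.2
    have ha : (0:ℝ) ≤ s / t := by positivity
    have hb : (0:ℝ) ≤ 1 - s / t := by
      have : s / t ≤ 1 := by rw [div_le_one ht]; exact hst.le
      linarith
    have hab : s / t + (1 - s / t) = 1 := by ring
    have hc := hconc.2 (Set.mem_univ (x + t • d)) (Set.mem_univ x) ha hb hab
    have heq : (s / t) • (x + t • d) + (1 - s / t) • x = x + s • d := by
      have htne : t ≠ 0 := ht.ne'
      funext j
      simp only [Pi.add_apply, Pi.smul_apply, smul_eq_mul]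
      field_simp
      ring
    rw [heq] at hc
    simp only [smul_eq_mul] at hc
    rw [div_le_div_iff₀ ht hs0]
    have hexp : (s / t * F (x + t • d) + (1 - s / t) * F x) * t
        = s * F (x + t • d) + (t - s) * F x := by
      field_simp
      try ring
    linarith [mul_le_mul_of_nonneg_right hc ht.le, hexp]
  have hmem : Set.Ioo (0:ℝ) t ∈ nhdsWithin (0:ℝ) (Set.Ioi 0) :=
    Ioo_mem_nhdsGT_of_mem ⟨le_refl 0, ht⟩
  have hev : ∀ᶠ s in nhdsWithin (0:ℝ) (Set.Ioi 0),
      (F (x + t • d) - F x) / t ≤ (F (x + s • d) - F x) / s :=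
    Filter.eventually_of_mem hmem key
  have hle : (F (x + t • d) - F x) / t ≤ L := ge_of_tendsto hL hev
  calc F (x + t • d) - F x = ((F (x + t • d) - F x) / t) * t := by
        field_simp
    _ ≤ L * t := mul_le_mul_of_nonneg_right hle ht.le
    _ = t * L := mul_comm _ _

theorem stmt15 {n : ℕ} (F : (Fin n → ℝ) → ℝ)
    (hconc : ConcaveOn ℝ Set.univ F)
    (hhom : ∀ c : ℝ, 0 < c → ∀ x, F (c • x) = c * F x)
    (x : Fin n → ℝ) (hx : x ∈ interior {y : Fin n → ℝ | ∀ i, 0 ≤ y i})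
    (N : Fin n → ℝ)
    (hN : ∀ i, HasDirDeriv F x (-(x i • (Pi.single i 1 : Fin n → ℝ))) (N i)) :
    ∀ k : ℕ, 0 < k →
      ((∑ i, (F ((k : ℝ) • x) - F ((k : ℝ) • x - x i • (Pi.single i 1 : Fin n → ℝ)))) - F x
          ≥ (∑ i, (-(N i))) - F x) ∧
      (∑ i, (-(N i))) - F x ≥ 0 := by
  have hF0 : F 0 = 0 := by
    have h2 := hhom 2 (by norm_num) 0
    simp only [smul_zero] at h2
    linarith
  -- superadditivity
  have hsuperadd : ∀ a b : Fin n → ℝ, F a + F b ≤ F (a + b) := by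
    intro a b
    have hc := hconc.2 (Set.mem_univ a) (Set.mem_univ b)
      (by norm_num : (0:ℝ) ≤ 1/2) (by norm_num : (0:ℝ) ≤ 1/2) (by norm_num)
    have heq : (1/2 : ℝ) • a + (1/2 : ℝ) • b = (1/2 : ℝ) • (a + b) := by
      rw [smul_add]
    rw [heq] at hc
    have hh := hhom (1/2) (by norm_num) (a + b)
    simp only [smul_eq_mul] at hc
    linarith
  have hsuper : ∀ (s : Finset (Fin n)) (a : Fin n → (Fin n → ℝ)),
      (∑ i ∈ s, F (a i)) ≤ F (∑ i ∈ s, a i) := by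
    intro s a
    induction s using Finset.induction_on with
    | empty => simp [hF0]
    | insert j s' hj ih =>
      rw [Finset.sum_insert hj, Finset.sum_insert hj]
      calc F (a j) + ∑ i ∈ s', F (a i) ≤ F (a j) + F (∑ i ∈ s', a i) :=
            add_le_add_right ih _
        _ ≤ F (a j + ∑ i ∈ s', a i) := hsuperadd _ _
  -- Part 2: ∑ -(N i) ≥ F x
  have part2 : F x ≤ ∑ i, (-(N i)) := by
    rcases Nat.eq_zero_or_pos n with h0 | hn
    · subst h0
      have hx0 : x = 0 := funext fun i => i.elim0
      rw [hx0, hF0]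
      simp
    · set d : Fin n → (Fin n → ℝ) := fun i => -(x i • (Pi.single i 1 : Fin n → ℝ)) with hd
      have hnR : (0:ℝ) < n := by exact_mod_cast hn
      have hsum_d : ∑ i, d i = -x := by
        have h1 : ∀ i, x i • (Pi.single i 1 : Fin n → ℝ) = Pi.single i (x i) := by
          intro i
          funext j
          by_cases h : j = i <;> simp [Pi.single_apply, h]
        simp only [hd, h1, Finset.sum_neg_distrib]
        rw [Finset.univ_sum_single]
      have hbound : ∀ s ∈ Set.Ioo (0:ℝ) 1,
          F x ≤ ∑ i, -((F (x + s • d i) - F x) / s) := by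
        intro s hs
        have hs0 : 0 < s := hs.1
        have hs1 : s < 1 := hs.2
        have key := hsuper Finset.univ (fun i => (n:ℝ)⁻¹ • (x + s • d i))
        have hsumeq : ∑ i, (n:ℝ)⁻¹ • (x + s • d i) = (1 - s / n) • x := by
          rw [← Finset.smul_sum, Finset.sum_add_distrib, ← Finset.smul_sum, hsum_d,
            Finset.sum_const, Finset.card_univ, Fintype.card_fin]
          funext j
          simp only [Pi.smul_apply, Pi.add_apply, Pi.neg_apply, smul_eq_mul, Pi.sub_apply,
            nsmul_eq_mul, Pi.natCast_apply, Pi.mul_apply]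
          field_simp
          try ring
        rw [hsumeq] at key
        have heach : ∀ i ∈ Finset.univ, F ((n:ℝ)⁻¹ • (x + s • d i)) = (n:ℝ)⁻¹ * F (x + s • d i) :=
          fun i _ => hhom _ (by positivity) _
        rw [Finset.sum_congr rfl heach] at key
        have hsn : 0 < 1 - s / n := by
          have h1 : s / n < 1 := by
            rw [div_lt_one hnR]
            have : (1:ℝ) ≤ n := by exact_mod_cast hn
            linarith
          linarith
        have hh := hhom _ hsn x
        rw [hh] at key
        rw [← Finset.mul_sum] at key
        -- key : n⁻¹ * ∑ F (x + s • d i) ≤ (1 - s/n) * F x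
        have key2 : ∑ i, F (x + s • d i) ≤ ((n:ℝ) - s) * F x := by
          have := mul_le_mul_of_nonneg_left key hnR.le
          rw [← mul_assoc, mul_inv_cancel₀ hnR.ne', one_mul] at this
          have hns : (n:ℝ) * ((1 - s / (n:ℝ)) * F x) = ((n:ℝ) - s) * F x := by
            field_simp
            try ring
          linarith [hns ▸ this]
        have hsumform : ∑ i, -((F (x + s • d i) - F x) / s)
            = ((n:ℝ) * F x - ∑ i, F (x + s • d i)) / s := by
          rw [eq_div_iff hs0.ne', Finset.sum_mul]
          have hterm : ∀ i ∈ Finset.univ, -((F (x + s • d i) - F x) / s) * s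
              = F x - F (x + s • d i) := by
            intro i _
            field_simp
            ring
          rw [Finset.sum_congr rfl hterm, Finset.sum_sub_distrib, Finset.sum_const,
            Finset.card_univ, Fintype.card_fin, nsmul_eq_mul]
        rw [hsumform, le_div_iff₀ hs0]
        nlinarith [key2]
      have hmem : Set.Ioo (0:ℝ) 1 ∈ nhdsWithin (0:ℝ) (Set.Ioi 0) :=
        Ioo_mem_nhdsGT_of_mem ⟨le_refl 0, by norm_num⟩
      have hev : ∀ᶠ s in nhdsWithin (0:ℝ) (Set.Ioi 0),
          F x ≤ ∑ i, -((F (x + s • d i) - F x) / s) :=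
        Filter.eventually_of_mem hmem hbound
      have htend : Tendsto (fun s : ℝ => ∑ i, -((F (x + s • d i) - F x) / s))
          (nhdsWithin (0:ℝ) (Set.Ioi 0)) (nhds (∑ i, -(N i))) := by
        apply tendsto_finset_sum
        intro i _
        exact (hN i).neg
      exact ge_of_tendsto htend hev
  intro k hk
  have hkR : (0:ℝ) < k := by exact_mod_cast hk
  constructor
  · rw [ge_iff_le]
    apply sub_le_sub_right
    apply Finset.sum_le_sum
    intro i _
    set d : Fin n → ℝ := -(x i • (Pi.single i 1 : Fin n → ℝ)) with hd
    have hA := quot_le_dirDeriv F hconc x d (N i) (hN i) (t := (k:ℝ)⁻¹) (by positivity)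
    have hmul : (k:ℝ) * (F (x + (k:ℝ)⁻¹ • d) - F x) ≤ (k:ℝ) * ((k:ℝ)⁻¹ * N i) :=
      mul_le_mul_of_nonneg_left hA hkR.le
    rw [← mul_assoc, mul_inv_cancel₀ hkR.ne', one_mul, mul_sub] at hmul
    have h2 : (k:ℝ) • (x + (k:ℝ)⁻¹ • d) = (k:ℝ) • x - x i • (Pi.single i 1 : Fin n → ℝ) := by
      rw [smul_add, smul_smul, mul_inv_cancel₀ hkR.ne', one_smul, hd, sub_eq_add_neg]
    have h1 : F ((k:ℝ) • x - x i • (Pi.single i 1 : Fin n → ℝ)) = (k:ℝ) * F (x + (k:ℝ)⁻¹ • d) := by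
      rw [← h2, hhom _ hkR]
    have h3 : F ((k:ℝ) • x) = (k:ℝ) * F x := hhom _ hkR x
    rw [h1, h3]
    linarith
  · rw [ge_iff_le, sub_nonneg]
    exact part2
end

section
/- Discrete Euler condition implies the infinitesimal one: for concave positively homogeneous F : ℝⁿ → ℝ and x interior, if for some k the discrete Euler gap ∑ᵢ [F(kx) − F(kx − xᵢeᵢ)] − F(x) = 0, then the infinitesimal Euler gap ∑ᵢ (−F'(x; −xᵢeᵢ)) − F(x) = 0. -/
open Filter Topology

lemma slope_anti_aux {n : ℕ} {F : (Fin n → ℝ) → ℝ}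
    (hconc : ConcaveOn ℝ Set.univ F) (x d : Fin n → ℝ) {t s : ℝ}
    (ht : 0 < t) (hts : t ≤ s) :
    (F (x + s • d) - F x) / s ≤ (F (x + t • d) - F x) / t := by
  have hs : 0 < s := ht.trans_le hts
  have ha : (0:ℝ) ≤ t / s := by positivity
  have hb : (0:ℝ) ≤ 1 - t / s := by
    have : t / s ≤ 1 := (div_le_one hs).2 hts
    linarith
  have hab : t / s + (1 - t / s) = 1 := by ring
  have key := hconc.2 (Set.mem_univ (x + s • d)) (Set.mem_univ x) ha hb hab
  have heq : (t / s) • (x + s • d) + (1 - t / s) • x = x + t • d := by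
    rw [smul_add, smul_smul, div_mul_cancel₀ _ hs.ne']
    module
  rw [heq, smul_eq_mul, smul_eq_mul] at key
  rw [div_le_div_iff₀ hs ht]
  have h2 := mul_le_mul_of_nonneg_right key hs.le
  have key2 : t * F (x + s • d) + (s - t) * F x ≤ s * F (x + t • d) := by
    have e : t * F (x + s • d) + (s - t) * F x
        = (t / s * F (x + s • d) + (1 - t / s) * F x) * s := by
      field_simp
    rw [e]; linarith [h2]
  linarith

theorem stmt16 {n : ℕ} (F : (Fin n → ℝ) → ℝ)
    (hconc : ConcaveOn ℝ Set.univ F)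
    (hhom : ∀ c : ℝ, 0 < c → ∀ x, F (c • x) = c * F x)
    (x : Fin n → ℝ) (hx : x ∈ interior {y : Fin n → ℝ | ∀ i, 0 ≤ y i})
    (N : Fin n → ℝ)
    (hN : ∀ i, HasDirDeriv F x (-(x i • (Pi.single i 1 : Fin n → ℝ))) (N i))
    (k : ℕ) (hk : 0 < k)
    (hgap : (∑ i, (F ((k : ℝ) • x) - F ((k : ℝ) • x - x i • (Pi.single i 1 : Fin n → ℝ)))) - F x = 0) :
    (∑ i, (-(N i))) - F x = 0 := by
  rcases Nat.eq_zero_or_pos n with hn | hn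
  · subst hn; simpa using hgap
  have hnR : (0:ℝ) < (n:ℝ) := by exact_mod_cast hn
  have hkR : (0:ℝ) < (k:ℝ) := by exact_mod_cast hk
  set d : Fin n → (Fin n → ℝ) := fun i => -(x i • (Pi.single i 1 : Fin n → ℝ)) with hd
  have hdN : ∀ i, HasDirDeriv F x (d i) (N i) := fun i => hN i
  -- sum of directions
  have hsum : ∑ i, x i • (Pi.single i 1 : Fin n → ℝ) = x := by
    have hxi : ∀ i, x i • (Pi.single i 1 : Fin n → ℝ) = Pi.single i (x i) := by
      intro i; rw [← Pi.single_smul, smul_eq_mul, mul_one]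
    simp_rw [hxi]; exact Finset.univ_sum_single x
  have hsumd : ∑ i, d i = -x := by
    have : ∑ i, d i = -∑ i, x i • (Pi.single i 1 : Fin n → ℝ) := by
      simp [hd]
    rw [this, hsum]
  -- rewrite discrete gap
  have hterm : ∀ i : Fin n, F ((k:ℝ) • x) - F ((k:ℝ) • x - x i • (Pi.single i 1 : Fin n → ℝ))
      = -((F (x + ((k:ℝ)⁻¹) • d i) - F x) / (k:ℝ)⁻¹) := by
    intro i
    have h2 : (k:ℝ) • x - x i • (Pi.single i 1 : Fin n → ℝ)
        = (k:ℝ) • (x + ((k:ℝ)⁻¹) • d i) := by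
      rw [smul_add, smul_smul, mul_inv_cancel₀ hkR.ne', one_smul, hd]
      module
    rw [hhom _ hkR, h2, hhom _ hkR]
    field_simp
    ring
  rw [Finset.sum_congr rfl (fun i _ => hterm i)] at hgap
  rw [Finset.sum_neg_distrib] at hgap
  -- hgap : -(∑ g_i(k⁻¹)) - F x = 0
  -- Step C : g_i(k⁻¹) ≤ N i
  have hC : ∀ i, (F (x + (k:ℝ)⁻¹ • d i) - F x) / (k:ℝ)⁻¹ ≤ N i := by
    intro i
    refine ge_of_tendsto (hdN i) ?_
    filter_upwards [Ioo_mem_nhdsGT_of_mem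
      (⟨le_refl 0, by positivity⟩ : (0:ℝ) ∈ Set.Ico 0 (k:ℝ)⁻¹)] with t ht
    exact slope_anti_aux hconc x (d i) ht.1 ht.2.le
  have hCsum : ∑ i, (F (x + (k:ℝ)⁻¹ • d i) - F x) / (k:ℝ)⁻¹ ≤ ∑ i, N i :=
    Finset.sum_le_sum fun i _ => hC i
  -- Step D : ∑ N i ≤ -F x
  have hJ : ∀ t : ℝ, 0 < t →
      ∑ i, (F (x + ((n:ℝ)*t) • d i) - F x) / ((n:ℝ)*t) ≤ (F (x + t • (-x)) - F x) / t := by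
    intro t ht
    have hw : ∑ _i : Fin n, (1/(n:ℝ)) = 1 := by
      rw [Finset.sum_const, Finset.card_univ, Fintype.card_fin, nsmul_eq_mul]
      field_simp
    have jensen := hconc.le_map_sum (fun i _ => by positivity) hw
      (fun (i : Fin n) _ => Set.mem_univ (x + ((n:ℝ)*t) • d i))
    have hpt : ∑ i, (1/(n:ℝ)) • (x + ((n:ℝ)*t) • d i) = x + t • (-x) := by
      have e1 : ∀ i : Fin n, (1/(n:ℝ)) • (x + ((n:ℝ)*t) • d i)
          = (1/(n:ℝ)) • x + t • d i := by
        intro i; rw [smul_add, smul_smul]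
        congr 2
        field_simp
      simp_rw [e1]
      rw [Finset.sum_add_distrib, Finset.sum_const, Finset.card_univ, Fintype.card_fin,
        ← Finset.smul_sum, hsumd]
      congr 1
      rw [← Nat.cast_smul_eq_nsmul ℝ, smul_smul]
      rw [show (n:ℝ) * (1/(n:ℝ)) = 1 by field_simp, one_smul]
    rw [hpt] at jensen
    simp only [smul_eq_mul] at jensen
    rw [le_div_iff₀ ht]
    have e : (∑ i, (F (x + ((n:ℝ)*t) • d i) - F x) / ((n:ℝ)*t)) * t
        = (∑ i, (1/(n:ℝ)) * F (x + ((n:ℝ)*t) • d i)) - F x := by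
      rw [Finset.sum_mul]
      have e2 : ∀ i : Fin n, (F (x + ((n:ℝ)*t) • d i) - F x) / ((n:ℝ)*t) * t
          = (1/(n:ℝ)) * F (x + ((n:ℝ)*t) • d i) - (1/(n:ℝ)) * F x := by
        intro i; field_simp
      simp_rw [e2]
      rw [Finset.sum_sub_distrib, Finset.sum_const, Finset.card_univ, Fintype.card_fin,
        nsmul_eq_mul]
      have : (n:ℝ) * (1/(n:ℝ) * F x) = F x := by field_simp
      rw [this]
    rw [e]
    linarith [jensen]
  have hmul : Tendsto (fun t : ℝ => (n:ℝ) * t) (𝓝[>] (0:ℝ)) (𝓝[>] (0:ℝ)) := by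
    apply tendsto_nhdsWithin_of_tendsto_nhds_of_eventually_within
    · have cont : Tendsto (fun t : ℝ => (n:ℝ) * t) (𝓝 (0:ℝ)) (𝓝 (0:ℝ)) := by
        simpa using ((continuous_mul_left (n:ℝ)).tendsto 0)
      exact cont.mono_left nhdsWithin_le_nhds
    · filter_upwards [self_mem_nhdsWithin] with t ht
      exact mul_pos hnR ht
  have hsumT : Tendsto (fun t : ℝ => ∑ i, (F (x + ((n:ℝ)*t) • d i) - F x) / ((n:ℝ)*t))
      (𝓝[>] (0:ℝ)) (𝓝 (∑ i, N i)) := by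
    apply tendsto_finset_sum
    intro i _
    exact (hdN i).comp hmul
  have hφ : Tendsto (fun t : ℝ => (F (x + t • (-x)) - F x) / t) (𝓝[>] (0:ℝ)) (𝓝 (-F x)) := by
    have hev : ∀ᶠ t in 𝓝[>] (0:ℝ), -F x = (F (x + t • (-x)) - F x) / t := by
      filter_upwards [Ioo_mem_nhdsGT_of_mem
        (⟨le_refl 0, one_pos⟩ : (0:ℝ) ∈ Set.Ico 0 1)] with t ht
      have h1 : x + t • (-x) = (1 - t) • x := by module
      have ht0 : t ≠ 0 := ne_of_gt ht.1
      rw [h1, hhom _ (by linarith [ht.2]), eq_div_iff ht0]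
      ring
    exact tendsto_const_nhds.congr' hev
  have hD : ∑ i, N i ≤ -F x := by
    refine le_of_tendsto_of_tendsto hsumT hφ ?_
    filter_upwards [self_mem_nhdsWithin] with t ht
    exact hJ t ht
  rw [Finset.sum_neg_distrib]
  linarith [hCsum, hD, hgap]
end
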